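/- Let α ∈ ℂ*, q ≥ 1, and τ = Λ/(t−α)^q with Λ = ℂ[t,t⁻¹]. For every n with 2 ≤ n ≤ q+1, there exists a ℂ-linear map Φ : τ → ℂ^{n-1} (to row vectors) satisfying Φ(t·y) = α·Φ(y)·J⁻¹ for all y ∈ τ, with first component φ₁ not identically zero, where J is the (n-1)×(n-1) unipotent Jordan block. -/

import Mathlib

open LaurentPolynomial

/-- The m×m nilpotent matrix with 1's on the superdiagonal. -/
def Nmat (m : ℕ) : Matrix (Fin m) (Fin m) ℂ :=
  Matrix.of fun i j => if (i : ℕ) + 1 = (j : ℕ) then 1 else 0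

lemma Nmat_pow (m k : ℕ) :
    (Nmat m) ^ k = Matrix.of (fun i j : Fin m => if (i : ℕ) + k = (j : ℕ) then (1 : ℂ) else 0) := by
  induction k with
  | zero =>
    ext i j
    simp [Matrix.one_apply, Fin.ext_iff, eq_comm]
  | succ k ih =>
    ext i j
    rw [pow_succ, ih]
    simp only [Matrix.mul_apply, Matrix.of_apply, Nmat, ite_mul, one_mul, zero_mul]
    by_cases h : (i : ℕ) + (k + 1) = (j : ℕ)
    · have hj : (i : ℕ) + k < m := by omega
      rw [Finset.sum_eq_single (⟨(i : ℕ) + k, hj⟩ : Fin m)]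
      · rw [if_pos rfl, if_pos (show (i : ℕ) + k + 1 = (j : ℕ) by omega), if_pos h]
      · intro l _ hl
        rw [if_neg]
        intro he
        exact hl (Fin.ext he.symm)
      · simp
    · rw [if_neg h]
      apply Finset.sum_eq_zero
      intro l _
      split
      · rename_i he
        rw [if_neg (by omega)]
      · rfl

theorem stmt6 (n q : ℕ) (hq : 1 ≤ q) (hn : 2 ≤ n) (hnq : n ≤ q + 1)
    (α : ℂ) (hα : α ≠ 0) :
    ∃ Φ : (LaurentPolynomial ℂ ⧸
        Ideal.span {((T 1 - C α) ^ q : LaurentPolynomial ℂ)}) →ₗ[ℂ] (Fin (n - 1) → ℂ),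
      (∀ y, Φ (Ideal.Quotient.mk _ (T 1 : LaurentPolynomial ℂ) * y)
          = α • Matrix.vecMul (Φ y) (1 + Nmat (n - 1))⁻¹) ∧
      (∃ y, Φ y ⟨0, by omega⟩ ≠ 0) := by
  set m := n - 1 with hm
  have hm1 : 1 ≤ m := by omega
  have hmq : m ≤ q := by omega
  set N := Nmat m with hNdef
  have hNm : N ^ m = 0 := by
    ext i j
    rw [hNdef, Nmat_pow]
    simp only [Matrix.of_apply, Matrix.zero_apply]
    rw [if_neg (by omega)]
  have hNq : N ^ q = 0 := pow_eq_zero_of_le hmq hNm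
  have hUnit : IsUnit (1 + N) := IsNilpotent.isUnit_one_add ⟨m, hNm⟩
  have hdet : IsUnit (1 + N).det := (Matrix.isUnit_iff_isUnit_det _).mp hUnit
  set M := (1 + N)⁻¹ with hMdef
  have hMmul : M * (1 + N) = 1 := Matrix.nonsing_inv_mul _ hdet
  have hMsub : M - 1 = -(M * N) := by
    have h1 : M * (1 + N) = M + M * N := by rw [mul_add, mul_one]
    rw [h1] at hMmul
    linear_combination (norm := abel) hMmul
  have hmulM : (1 + N) * M = 1 := Matrix.mul_nonsing_inv _ hdet
  have hCom : Commute M N := by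
    have h1 : N * (1 + N) = (1 + N) * N := by noncomm_ring
    have e1 : M * N * (1 + N) * M = M * N := by
      rw [mul_assoc (M * N), hmulM, mul_one]
    have e2 : M * (1 + N) * N * M = N * M := by
      rw [hMmul, one_mul]
    have e3 : M * N * (1 + N) = M * (1 + N) * N := by
      rw [mul_assoc, mul_assoc, h1]
    show M * N = N * M
    rw [← e1, e3, e2]
  have hA : ((α • M) - α • (1 : Matrix (Fin m) (Fin m) ℂ)) ^ q = 0 := by
    rw [← smul_sub, smul_pow, hMsub, neg_pow, hCom.mul_pow, hNq, mul_zero, mul_zero, smul_zero]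
  have hMunit : IsUnit M := Matrix.isUnit_nonsing_inv_iff.mpr hUnit
  have hUnitαM : IsUnit (α • M) := by
    have h1 : IsUnit ((α : ℂ) • (1 : Matrix (Fin m) (Fin m) ℂ)) := by
      rw [← Algebra.algebraMap_eq_smul_one]
      exact (isUnit_iff_ne_zero.mpr hα).map (algebraMap ℂ _)
    have h2 : α • M = (α • (1 : Matrix (Fin m) (Fin m) ℂ)) * M := by
      rw [smul_mul_assoc, one_mul]
    rw [h2]
    exact h1.mul hMunit
  obtain ⟨u, hu⟩ := hUnitαM
  let F : Multiplicative ℤ →* Matrix (Fin m) (Fin m) ℂ :=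
    (Units.coeHom _).comp (zpowersHom _ u)
  let ψ : LaurentPolynomial ℂ →ₐ[ℂ] Matrix (Fin m) (Fin m) ℂ :=
    AddMonoidAlgebra.lift ℂ _ ℤ F
  have hψT : ψ (T 1) = α • M := by
    show AddMonoidAlgebra.lift ℂ _ ℤ F (AddMonoidAlgebra.single (1 : ℤ) (1 : ℂ)) = α • M
    rw [AddMonoidAlgebra.lift_single]
    show (1 : ℂ) • ((u ^ ((1 : ℤ)) : (Matrix (Fin m) (Fin m) ℂ)ˣ) : Matrix (Fin m) (Fin m) ℂ)
        = α • M
    rw [zpow_one, one_smul, hu]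
  have hψC : ψ (C α) = α • 1 := by
    rw [C_eq_algebraMap, AlgHom.commutes, Algebra.algebraMap_eq_smul_one]
  have hψg : ψ ((T 1 - C α) ^ q) = 0 := by
    rw [map_pow, map_sub, hψT, hψC, hA]
  have hker : ∀ a ∈ Ideal.span {((T 1 - C α) ^ q : LaurentPolynomial ℂ)}, ψ a = 0 := by
    intro a ha
    rw [Ideal.mem_span_singleton] at ha
    obtain ⟨c, rfl⟩ := ha
    rw [map_mul, hψg, zero_mul]
  set ψbar := Ideal.Quotient.liftₐ _ ψ hker with hψbar
  have hbar_mk : ∀ p : LaurentPolynomial ℂ, ψbar (Ideal.Quotient.mk _ p) = ψ p := by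
    intro p
    rw [hψbar, Ideal.Quotient.liftₐ_apply]
    rfl
  let i0 : Fin m := ⟨0, hm1⟩
  let L : Matrix (Fin m) (Fin m) ℂ →ₗ[ℂ] (Fin m → ℂ) :=
    { toFun := fun X => X i0
      map_add' := fun _ _ => rfl
      map_smul' := fun _ _ => rfl }
  refine ⟨L.comp ψbar.toLinearMap, ?_, ?_⟩
  · intro y
    show ψbar (Ideal.Quotient.mk _ (T 1) * y) i0 = α • Matrix.vecMul (ψbar y i0) M
    rw [mul_comm, map_mul, hbar_mk, hψT]
    funext j
    simp only [Matrix.mul_apply, Matrix.smul_apply, Matrix.vecMul, dotProduct,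
      Pi.smul_apply, smul_eq_mul, Finset.mul_sum]
    exact Finset.sum_congr rfl fun k _ => by ring
  · refine ⟨Ideal.Quotient.mk _ 1, ?_⟩
    show ψbar (Ideal.Quotient.mk _ 1) i0 ⟨0, by omega⟩ ≠ 0
    rw [hbar_mk, map_one]
    simp [Matrix.one_apply, i0]
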